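/- Define the lowering operator L = 2 tan(D/2) acting on polynomials, i.e. L p = 2 Σ_{k≥1} θ_{2k-1} (D/2)^{2k-1} p where tan x = Σ_{k≥1} θ_{2k-1} x^{2k-1} is the Taylor series of tangent and D is differentiation (the sum is finite on polynomials). Then L φ̂_n = n φ̂_{n-1} for every n ≥ 1. -/

import Mathlib

open Polynomial

/-- The Taylor coefficients of the tangent: `tan x = Σ_{k≥1} θ_{2k-1} x^{2k-1}` with
`θ_{2k-1} = (-1)^{k-1} 4^k (4^k - 1) B_{2k}/(2k)!`. -/
noncomputable def tanCoeff (k : ℕ) : ℝ :=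
  (-1 : ℝ) ^ (k - 1) * 4 ^ k * (4 ^ k - 1) * ((bernoulli (2 * k) : ℚ) : ℝ) / (Nat.factorial (2 * k))

/-- The lowering operator `L = 2 tan(D/2)`; on a polynomial the tangent series terminates,
so it is given by the finite sum `L p = 2 Σ_k θ_{2k-1} (1/2)^{2k-1} D^{2k-1} p`. -/
noncomputable def lowering (p : Polynomial ℝ) : Polynomial ℝ :=
  ∑ k ∈ Finset.range (p.natDegree + 1),
    (2 * tanCoeff (k + 1) * (1 / 2 : ℝ) ^ (2 * (k + 1) - 1)) •
      derivative^[2 * (k + 1) - 1] p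

namespace MRML

noncomputable def tau (k : ℕ) : ℝ :=
  4 ^ k * ((4 : ℝ) ^ k - 1) * ((bernoulli (2 * k) : ℚ) : ℝ) / (Nat.factorial (2 * k))

noncomputable def cTh (n : ℕ) : ℝ := if n % 2 = 1 then tau ((n + 1) / 2) else 0

noncomputable def Th : PowerSeries ℝ := PowerSeries.mk cTh

noncomputable def E2 : PowerSeries ℝ := PowerSeries.rescale 2 (PowerSeries.exp ℝ)

lemma bern_odd (k : ℕ) : _root_.bernoulli (2 * k + 3) = 0 := by
  rw [bernoulli_eq_bernoulli'_of_ne_one (by omega)]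
  exact bernoulli'_eq_zero_of_odd ⟨k + 1, by ring⟩ (by omega)

lemma coeff_bps (n : ℕ) : PowerSeries.coeff n (bernoulliPowerSeries ℝ) =
    ((bernoulli n : ℚ) : ℝ) / (Nat.factorial n) := by
  rw [bernoulliPowerSeries, PowerSeries.coeff_mk, eq_ratCast]
  push_cast
  ring

lemma hXTh : (PowerSeries.X : PowerSeries ℝ) * Th =
    PowerSeries.rescale 4 (bernoulliPowerSeries ℝ) -
      PowerSeries.rescale 2 (bernoulliPowerSeries ℝ) + PowerSeries.X := by
  ext n
  simp only [map_add, map_sub, PowerSeries.coeff_rescale, coeff_bps, PowerSeries.coeff_X]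
  match n with
  | 0 => simp [PowerSeries.coeff_zero_X_mul]
  | 1 =>
      rw [PowerSeries.coeff_succ_X_mul]
      simp [Th, PowerSeries.coeff_mk, cTh, _root_.bernoulli_one]
      norm_num
  | (m + 2) =>
      rw [PowerSeries.coeff_succ_X_mul]
      simp only [Th, PowerSeries.coeff_mk, cTh]
      rcases Nat.even_or_odd m with ⟨k, rfl⟩ | ⟨k, rfl⟩
      · -- n = 2k+2 even
        have h1 : (k + k + 1) % 2 = 1 := by omega
        have h2 : (k + k + 1 + 1) / 2 = k + 1 := by omega
        rw [if_pos h1, h2, if_neg (by omega)]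
        have hkk : k + k + 2 = 2 * (k + 1) := by omega
        rw [hkk]
        have e1 : (2:ℝ)^(2*(k+1)) = 4^(k+1) := by
          rw [pow_mul]; norm_num
        have e2 : (4:ℝ)^(2*(k+1)) = 4^(k+1) * 4^(k+1) := by
          rw [two_mul, pow_add]
        rw [e1, e2, tau]
        ring
      · -- n = 2k+3 odd
        have h1 : (2 * k + 1 + 1) % 2 = 0 := by omega
        rw [if_neg (by omega), if_neg (by omega)]
        have : 2 * k + 1 + 2 = 2 * k + 3 := by ring
        rw [this, bern_odd]
        push_cast
        ring



lemma rescale_mul_exp (c : ℝ) :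
    PowerSeries.rescale c (bernoulliPowerSeries ℝ) *
      (PowerSeries.rescale c (PowerSeries.exp ℝ) - 1) = PowerSeries.C c * PowerSeries.X := by
  have h := congrArg (PowerSeries.rescale c) (bernoulliPowerSeries_mul_exp_sub_one ℝ)
  rw [map_mul, map_sub, map_one, PowerSeries.rescale_X] at h
  exact h

lemma E2sq : E2 * E2 = PowerSeries.rescale 4 (PowerSeries.exp ℝ) := by
  rw [E2, PowerSeries.exp_mul_exp_eq_exp_add]; norm_num

lemma E2_sub_one_ne : E2 - 1 ≠ 0 := by
  intro h
  have h1 := congrArg (PowerSeries.coeff 1) h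
  rw [map_sub, PowerSeries.coeff_one, map_zero] at h1
  simp only [E2, PowerSeries.coeff_rescale, PowerSeries.coeff_exp, eq_ratCast] at h1
  norm_num [Nat.factorial] at h1

lemma E2_add_one_ne : E2 + 1 ≠ 0 := by
  intro h
  have h1 := congrArg (PowerSeries.coeff 0) h
  rw [map_add, PowerSeries.coeff_one, map_zero] at h1
  simp only [E2, PowerSeries.coeff_rescale, PowerSeries.coeff_exp, eq_ratCast] at h1
  norm_num [Nat.factorial] at h1

lemma hTh_fun : Th * (E2 + 1) = E2 - 1 := by
  have h2 := rescale_mul_exp 2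
  have h4 := rescale_mul_exp 4
  have e4 := E2sq
  simp only [E2] at e4
  rw [← e4] at h4
  rw [show PowerSeries.C (2:ℝ) = (2:PowerSeries ℝ) from map_ofNat _ 2] at h2
  rw [show PowerSeries.C (4:ℝ) = (4:PowerSeries ℝ) from map_ofNat _ 4] at h4
  have key : (PowerSeries.X * (Th * (E2 + 1) - (E2 - 1))) * (E2 - 1) = 0 := by
    simp only [E2]
    linear_combination ((PowerSeries.rescale 2 (PowerSeries.exp ℝ)+1)*(PowerSeries.rescale 2 (PowerSeries.exp ℝ)-1)) * hXTh + h4 - (PowerSeries.rescale 2 (PowerSeries.exp ℝ)+1) * h2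
  rcases mul_eq_zero.mp key with h | h
  · rcases mul_eq_zero.mp h with h | h
    · exact absurd h PowerSeries.X_ne_zero
    · exact sub_eq_zero.mp h
  · exact absurd h E2_sub_one_ne

lemma dE2 : (PowerSeries.derivative ℝ) E2 = 2 * E2 := by
  ext n
  rw [PowerSeries.coeff_derivative]
  rw [show (2 : PowerSeries ℝ) = PowerSeries.C 2 from (map_ofNat _ 2).symm,
    PowerSeries.coeff_C_mul]
  simp only [E2, PowerSeries.coeff_rescale, PowerSeries.coeff_exp, eq_ratCast]
  have hn : ((n.factorial : ℝ)) ≠ 0 := by positivity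
  push_cast [Nat.factorial_succ]
  field_simp
  ring

lemma hODE : (PowerSeries.derivative ℝ) Th = 1 - Th * Th := by
  have hd := congrArg (⇑(PowerSeries.derivative ℝ)) hTh_fun
  rw [Derivation.leibniz] at hd
  simp only [map_add, map_sub, Derivation.map_one_eq_zero, add_zero, sub_zero, smul_eq_mul,
    dE2] at hd
  have key : ((PowerSeries.derivative ℝ) Th - (1 - Th * Th)) * ((E2+1)*(E2+1)) = 0 := by
    linear_combination (E2+1) * hd - (1-Th)*(E2+1) * hTh_fun
  rcases mul_eq_zero.mp key with h | h
  · exact sub_eq_zero.mp h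
  · rcases mul_eq_zero.mp h with h | h <;> exact absurd h E2_add_one_ne

lemma TAU (k : ℕ) : ((2*k+1 : ℕ) : ℝ) * tau (k+1) =
    (if k = 0 then 1 else 0) - ∑ p ∈ Finset.HasAntidiagonal.antidiagonal (2*k), cTh p.1 * cTh p.2 := by
  have h := congrArg (PowerSeries.coeff (2*k)) hODE
  rw [PowerSeries.coeff_derivative, map_sub, PowerSeries.coeff_one, PowerSeries.coeff_mul] at h
  simp only [Th, PowerSeries.coeff_mk] at h
  have h1 : cTh (2*k+1) = tau (k+1) := by
    simp only [cTh]; rw [if_pos (by omega)]; congr 1; omega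
  rw [h1] at h
  have h2 : (if 2*k = 0 then (1:ℝ) else 0) = (if k = 0 then 1 else 0) := by
    by_cases hk : k = 0 <;> simp [hk]
  rw [h2] at h
  push_cast at h ⊢
  linarith



noncomputable def A (k : ℕ) : ℝ := 2 * tanCoeff k * (1 / 2 : ℝ) ^ (2 * k - 1)

lemma A_zero : A 0 = 0 := by simp [A, tanCoeff]

lemma A_succ (k : ℕ) : A (k + 1) = (-1)^k * tau (k+1) * (1/4:ℝ)^k := by
  simp only [A, tanCoeff, tau]
  rw [show 2*(k+1) - 1 = 2*k+1 from by omega, show (k+1) - 1 = k from by omega]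
  have e : (2:ℝ) * (1/2)^(2*k+1) = (1/4)^k := by
    rw [pow_succ, pow_mul]; norm_num; ring
  rw [← e]
  ring

lemma tau_one : tau 1 = 1 := by
  have hb : _root_.bernoulli 2 = 1/6 := by
    rw [bernoulli_eq_bernoulli'_of_ne_one (by norm_num), bernoulli'_two]
  norm_num [tau, hb, Nat.factorial]

lemma shift_antidiagonal {M : Type*} [AddCommMonoid M] (g : ℕ → ℕ → M)
    (h0 : ∀ j, g 0 j = 0) (h0' : ∀ i, g i 0 = 0) (s : ℕ) :
    ∑ p ∈ Finset.HasAntidiagonal.antidiagonal (s+2), g p.1 p.2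
      = ∑ p ∈ Finset.HasAntidiagonal.antidiagonal s, g (p.1+1) (p.2+1) := by
  classical
  rw [← Finset.sum_filter_of_ne (p := fun q : ℕ × ℕ => q.1 ≠ 0 ∧ q.2 ≠ 0) ?hvanish]
  case hvanish =>
    rintro ⟨a, b⟩ hx hne
    constructor
    · rintro rfl; exact hne (h0 b)
    · rintro rfl; exact hne (h0' a)
  apply Finset.sum_nbij' (i := fun q : ℕ × ℕ => (q.1 - 1, q.2 - 1))
    (j := fun q : ℕ × ℕ => (q.1 + 1, q.2 + 1))
  · rintro ⟨a, b⟩ hq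
    simp only [Finset.mem_filter, Finset.HasAntidiagonal.mem_antidiagonal] at hq ⊢
    omega
  · rintro ⟨a, b⟩ hq
    simp only [Finset.mem_filter, Finset.HasAntidiagonal.mem_antidiagonal] at hq ⊢
    omega
  · rintro ⟨a, b⟩ hq
    simp only [Finset.mem_filter, Finset.HasAntidiagonal.mem_antidiagonal] at hq
    simp only [Prod.mk.injEq]
    omega
  · rintro ⟨a, b⟩ hq
    simp only [Finset.HasAntidiagonal.mem_antidiagonal] at hq
    simp only [Prod.mk.injEq]
    omega
  · rintro ⟨a, b⟩ hq
    simp only [Finset.mem_filter, Finset.HasAntidiagonal.mem_antidiagonal] at hq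
    have e1 : a - 1 + 1 = a := by omega
    have e2 : b - 1 + 1 = b := by omega
    simp only [e1, e2]

lemma R1 (s : ℕ) : ∑ p ∈ Finset.HasAntidiagonal.antidiagonal (2*(s+1)), cTh p.1 * cTh p.2
    = ∑ p ∈ Finset.HasAntidiagonal.antidiagonal s, tau (p.1+1) * tau (p.2+1) := by
  classical
  rw [← Finset.sum_filter_of_ne (p := fun q : ℕ × ℕ => q.1 % 2 = 1) ?hvanish]
  case hvanish =>
    rintro ⟨a, b⟩ hx hne
    by_contra h
    exact hne (by simp [cTh, h])
  apply Finset.sum_nbij' (i := fun q : ℕ × ℕ => ((q.1 - 1)/2, (q.2 - 1)/2))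
    (j := fun q : ℕ × ℕ => (2*q.1 + 1, 2*q.2 + 1))
  · rintro ⟨a, b⟩ hq
    simp only [Finset.mem_filter, Finset.HasAntidiagonal.mem_antidiagonal] at hq ⊢
    omega
  · rintro ⟨a, b⟩ hq
    simp only [Finset.mem_filter, Finset.HasAntidiagonal.mem_antidiagonal] at hq ⊢
    omega
  · rintro ⟨a, b⟩ hq
    simp only [Finset.mem_filter, Finset.HasAntidiagonal.mem_antidiagonal] at hq
    simp only [Prod.mk.injEq]
    omega
  · rintro ⟨a, b⟩ hq
    simp only [Finset.HasAntidiagonal.mem_antidiagonal] at hq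
    simp only [Prod.mk.injEq]
    omega
  · rintro ⟨a, b⟩ hq
    simp only [Finset.mem_filter, Finset.HasAntidiagonal.mem_antidiagonal] at hq
    simp only [cTh]
    have hb : b % 2 = 1 := by omega
    rw [if_pos hq.2, if_pos hb]
    have e1 : (a + 1)/2 = (a-1)/2 + 1 := by omega
    have e2 : (b + 1)/2 = (b-1)/2 + 1 := by omega
    rw [e1, e2]

lemma KEY (k : ℕ) : A (k+1) * ((2*k+1 : ℕ) : ℝ) =
    (if k = 0 then 1 else 0)
      + (1/4) * ∑ p ∈ Finset.HasAntidiagonal.antidiagonal (k+1), A p.1 * A p.2 := by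
  cases k with
  | zero =>
    simp [Finset.Nat.antidiagonal_succ, A_zero, A_succ, tau_one]
  | succ s =>
    have ht := TAU (s+1)
    rw [R1 s, if_neg (by omega)] at ht
    have hsh : ∑ p ∈ Finset.HasAntidiagonal.antidiagonal (s+1+1), A p.1 * A p.2
        = ∑ p ∈ Finset.HasAntidiagonal.antidiagonal s, A (p.1+1) * A (p.2+1) :=
      shift_antidiagonal (fun i j => A i * A j) (by simp [A_zero]) (by simp [A_zero]) s
    rw [hsh]
    have hterm : ∑ p ∈ Finset.HasAntidiagonal.antidiagonal s, A (p.1+1) * A (p.2+1)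
        = (-1)^s * (1/4:ℝ)^s * ∑ p ∈ Finset.HasAntidiagonal.antidiagonal s, tau (p.1+1) * tau (p.2+1) := by
      rw [Finset.mul_sum]
      apply Finset.sum_congr rfl
      intro p hp
      have hps : p.1 + p.2 = s := Finset.HasAntidiagonal.mem_antidiagonal.mp hp
      rw [A_succ, A_succ]
      rw [show ((-1:ℝ)^p.1 * tau (p.1+1) * (1/4:ℝ)^p.1) * ((-1:ℝ)^p.2 * tau (p.2+1) * (1/4:ℝ)^p.2)
        = ((-1:ℝ)^(p.1+p.2)) * ((1/4:ℝ)^(p.1+p.2)) * (tau (p.1+1)*tau (p.2+1)) from by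
          rw [pow_add, pow_add]; ring]
      rw [hps]
    rw [hterm, A_succ]
    set S := ∑ p ∈ Finset.HasAntidiagonal.antidiagonal s, tau (p.1+1)*tau (p.2+1) with hS
    push_cast at ht ⊢
    have e1 : ((-1:ℝ))^(s+1) = -(-1)^s := by rw [pow_succ]; ring
    have e2 : ((1/4:ℝ))^(s+1) = (1/4)^s * (1/4) := pow_succ _ _
    rw [e1, e2]
    linear_combination (-(-1:ℝ)^s * (1/4)^s * (1/4)) * ht



lemma derivIter_eq_pow (k : ℕ) (p : ℝ[X]) :
    derivative^[k] p = ((derivative : ℝ[X] →ₗ[ℝ] ℝ[X]) ^ k) p :=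
  (Module.End.pow_apply _ _ _).symm

lemma iter_sum {ι : Type*} (s : Finset ι) (k : ℕ) (g : ι → ℝ[X]) :
    derivative^[k] (∑ i ∈ s, g i) = ∑ i ∈ s, derivative^[k] (g i) := by
  simp only [derivIter_eq_pow, map_sum]

lemma iter_smul (k : ℕ) (c : ℝ) (p : ℝ[X]) :
    derivative^[k] (c • p) = c • derivative^[k] p := by
  simp only [derivIter_eq_pow, map_smul]

lemma iter_sub (k : ℕ) (p q : ℝ[X]) :
    derivative^[k] (p - q) = derivative^[k] p - derivative^[k] q := by
  simp only [derivIter_eq_pow, map_sub]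

noncomputable def LN (N : ℕ) (p : ℝ[X]) : ℝ[X] :=
  ∑ k ∈ Finset.range N, A (k+1) • derivative^[2*k+1] p

lemma LN_smul (N : ℕ) (c : ℝ) (p : ℝ[X]) : LN N (c • p) = c • LN N p := by
  unfold LN
  rw [Finset.smul_sum]
  exact Finset.sum_congr rfl fun k _ => by rw [iter_smul, smul_comm]

lemma LN_sub (N : ℕ) (p q : ℝ[X]) : LN N (p - q) = LN N p - LN N q := by
  unfold LN
  rw [← Finset.sum_sub_distrib]
  exact Finset.sum_congr rfl fun k _ => by rw [iter_sub, smul_sub]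

lemma lowering_eq (p : ℝ[X]) : lowering p = LN (p.natDegree + 1) p := by
  unfold lowering LN A
  apply Finset.sum_congr rfl
  intro k _
  rw [show 2*(k+1) - 1 = 2*k+1 from by omega]

lemma LN_stable (p : ℝ[X]) {N M : ℕ} (hNM : N ≤ M) (h : p.natDegree < 2*N + 1) :
    LN M p = LN N p := by
  unfold LN
  symm
  apply Finset.sum_subset (Finset.range_subset_range.mpr hNM)
  intro k hk hnk
  rw [Finset.mem_range] at hk
  rw [Finset.mem_range, not_lt] at hnk
  rw [Polynomial.iterate_derivative_eq_zero (show p.natDegree < 2*k+1 by omega), smul_zero]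

lemma lowering_eq_LN (p : ℝ[X]) {N : ℕ} (h : p.natDegree < 2*N + 1) :
    lowering p = LN N p := by
  rw [lowering_eq]
  rcases le_total N (p.natDegree + 1) with hle | hle
  · exact LN_stable p hle h
  · exact (LN_stable p hle (by omega)).symm

lemma iter_deriv_X_mul (m : ℕ) (p : ℝ[X]) :
    derivative^[m+1] (X * p) = X * derivative^[m+1] p + (m+1 : ℕ) • derivative^[m] p := by
  induction m generalizing p with
  | zero =>
      show derivative (X * p) = X * derivative p + (0+1 : ℕ) • p
      rw [derivative_mul, derivative_X, one_mul, show (0+1:ℕ) = 1 from rfl, one_smul]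
      abel
  | succ n ih =>
      rw [Function.iterate_succ_apply, derivative_mul, derivative_X, one_mul]
      have hadd : derivative^[n+1] (p + X * derivative p)
          = derivative^[n+1] p + derivative^[n+1] (X * derivative p) := by
        simp only [derivIter_eq_pow, map_add]
      rw [hadd, ih (derivative p)]
      have e1 : (⇑derivative)^[n+1] (derivative p) = (⇑derivative)^[n+1+1] p :=
        (Function.iterate_succ_apply (⇑derivative) (n+1) p).symm
      have e2 : (⇑derivative)^[n] (derivative p) = (⇑derivative)^[n+1] p :=
        (Function.iterate_succ_apply (⇑derivative) n p).symm
      rw [e1, e2]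
      conv_rhs => rw [succ_nsmul]
      abel

lemma box_tri {M : Type*} [AddCommMonoid M] (N : ℕ) (f : ℕ → ℕ → M)
    (hf : ∀ u v, N ≤ u + v → f u v = 0) :
    ∑ u ∈ Finset.range N, ∑ v ∈ Finset.range N, f u v
      = ∑ s ∈ Finset.range N, ∑ q ∈ Finset.HasAntidiagonal.antidiagonal s, f q.1 q.2 := by
  classical
  have hdisj : (↑(Finset.range N) : Set ℕ).PairwiseDisjoint Finset.HasAntidiagonal.antidiagonal := by
    intro a _ b _ hab
    simp only [Function.onFun, Finset.disjoint_left]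
    rintro ⟨x, y⟩ hxa hxb
    rw [Finset.HasAntidiagonal.mem_antidiagonal] at hxa hxb
    exact hab (hxa ▸ hxb.symm ▸ rfl)
  rw [← Finset.sum_biUnion hdisj, ← Finset.sum_product']
  symm
  apply Finset.sum_subset
  · rintro ⟨x, y⟩ hx
    rw [Finset.mem_biUnion] at hx
    obtain ⟨s, hs, hmem⟩ := hx
    rw [Finset.mem_range] at hs
    rw [Finset.HasAntidiagonal.mem_antidiagonal] at hmem
    rw [Finset.mem_product, Finset.mem_range, Finset.mem_range]
    omega
  · rintro ⟨x, y⟩ hx hnx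
    by_cases hxy : N ≤ x + y
    · exact hf x y hxy
    · exfalso
      apply hnx
      rw [Finset.mem_biUnion]
      exact ⟨x + y, Finset.mem_range.mpr (by omega), Finset.HasAntidiagonal.mem_antidiagonal.mpr rfl⟩

lemma tri_eq (N : ℕ) (p : ℝ[X]) (hdeg : p.natDegree < 2*(N+1)) :
    ∑ k ∈ Finset.range (N+1),
        (∑ q ∈ Finset.HasAntidiagonal.antidiagonal (k+1), A q.1 * A q.2) • derivative^[2*k] p
      = ∑ s ∈ Finset.range (N+1), ∑ q ∈ Finset.HasAntidiagonal.antidiagonal s,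
          (A (q.1+1) * A (q.2+1)) • derivative^[2*(q.1+q.2)+2] p := by
  rw [Finset.sum_range_succ' _ N, Finset.sum_range_succ]
  have hlast : ∑ q ∈ Finset.HasAntidiagonal.antidiagonal N,
      (A (q.1+1) * A (q.2+1)) • derivative^[2*(q.1+q.2)+2] p = 0 := by
    apply Finset.sum_eq_zero
    rintro ⟨x, y⟩ hq
    rw [Finset.HasAntidiagonal.mem_antidiagonal] at hq
    simp only
    rw [Polynomial.iterate_derivative_eq_zero (by omega), smul_zero]
  have hzero : (∑ q ∈ Finset.HasAntidiagonal.antidiagonal (0+1), A q.1 * A q.2) • derivative^[2*0] p = 0 := by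
    rw [show (0:ℕ)+1 = 1 from rfl]
    rw [show ∑ q ∈ Finset.HasAntidiagonal.antidiagonal 1, A q.1 * A q.2 = 0 from by
      simp [Finset.Nat.antidiagonal_succ, A_zero]]
    rw [zero_smul]
  rw [hlast, hzero, add_zero, add_zero]
  apply Finset.sum_congr rfl
  intro k _
  rw [Finset.sum_smul]
  have hsh := shift_antidiagonal (fun i j => (A i * A j) • derivative^[2*(k+1)] p)
    (fun j => by simp [A_zero]) (fun i => by simp [A_zero]) k
  rw [show k+1+1 = k+2 from rfl, hsh]
  apply Finset.sum_congr rfl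
  rintro ⟨x, y⟩ hq
  rw [Finset.HasAntidiagonal.mem_antidiagonal] at hq
  simp only
  rw [show 2*(x+y)+2 = 2*(k+1) from by omega]

lemma LN_LN (N : ℕ) (p : ℝ[X]) :
    LN N (LN N p) = ∑ u ∈ Finset.range N, ∑ v ∈ Finset.range N,
      (A (u+1) * A (v+1)) • derivative^[2*(u+v)+2] p := by
  unfold LN
  apply Finset.sum_congr rfl
  intro u _
  rw [iter_sum, Finset.smul_sum]
  apply Finset.sum_congr rfl
  intro v _
  rw [iter_smul, smul_smul, ← Function.iterate_add_apply]
  rw [show 2*u+1+(2*v+1) = 2*(u+v)+2 from by omega]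

lemma LN_comm (N : ℕ) (p : ℝ[X]) (hdeg : p.natDegree < 2*(N+1)) :
    LN (N+1) (X * p) = X * LN (N+1) p + p + (1/4 : ℝ) • LN (N+1) (LN (N+1) p) := by
  have hL : LN (N+1) (X * p)
      = X * LN (N+1) p + ∑ k ∈ Finset.range (N+1),
          (A (k+1) * ((2*k+1 : ℕ):ℝ)) • derivative^[2*k] p := by
    unfold LN
    rw [Finset.mul_sum, ← Finset.sum_add_distrib]
    apply Finset.sum_congr rfl
    intro k _
    rw [show (2*k+1 : ℕ) = (2*k)+1 from rfl, iter_deriv_X_mul (2*k) p, smul_add]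
    congr 1
    · rw [Polynomial.smul_eq_C_mul, Polynomial.smul_eq_C_mul]; ring
    · rw [← Nat.cast_smul_eq_nsmul ℝ (2*k+1), smul_smul]
  rw [hL, add_assoc]
  congr 1
  have hK : ∀ k : ℕ, (A (k+1) * ((2*k+1:ℕ):ℝ)) • derivative^[2*k] p
      = ((if k = 0 then (1:ℝ) else 0) • derivative^[2*k] p)
        + (1/4:ℝ) • ((∑ q ∈ Finset.HasAntidiagonal.antidiagonal (k+1), A q.1 * A q.2) • derivative^[2*k] p) := by
    intro k
    rw [KEY k, add_smul, ← smul_smul]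
  rw [Finset.sum_congr rfl (fun k _ => hK k), Finset.sum_add_distrib, ← Finset.smul_sum]
  congr 1
  · rw [Finset.sum_eq_single 0 (fun b _ hb => by rw [if_neg hb, zero_smul])
      (fun h => absurd (Finset.mem_range.mpr (by omega)) h)]
    simp
  · congr 1
    rw [tri_eq N p hdeg, LN_LN]
    exact (box_tri (N+1) (fun u v => (A (u+1) * A (v+1)) • derivative^[2*(u+v)+2] p)
      (fun u v huv => by
        show (A (u+1) * A (v+1)) • derivative^[2*(u+v)+2] p = 0
        rw [Polynomial.iterate_derivative_eq_zero (by omega), smul_zero])).symm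



lemma A_one : A 1 = 1 := by
  rw [A_succ 0, tau_one]; norm_num

section Main

variable (f : ℕ → Polynomial ℝ)

lemma fdeg (h0 : f 0 = 1) (h1 : f 1 = X)
    (hrec : ∀ n : ℕ, 1 ≤ n →
      f (n + 1) = X * f n - C ((n : ℝ) * ((n : ℝ) + 1) / 4) * f (n - 1)) :
    ∀ n, (f n).Monic ∧ (f n).natDegree = n := by
  have key : ∀ n, ((f n).Monic ∧ (f n).natDegree = n) ∧
      ((f (n+1)).Monic ∧ (f (n+1)).natDegree = n+1) := by
    intro n
    induction n with
    | zero =>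
      exact ⟨⟨by rw [h0]; exact monic_one, by rw [h0]; exact natDegree_one⟩,
        ⟨by rw [h1]; exact monic_X, by rw [h1]; exact natDegree_X⟩⟩
    | succ m ih =>
      refine ⟨ih.2, ?_⟩
      have hr := hrec (m+1) (by omega)
      rw [show m+1-1 = m from by omega] at hr
      have hq : (X * f (m+1)).Monic := monic_X.mul ih.2.1
      have hqd : (X * f (m+1)).natDegree = m+2 := by
        rw [monic_X.natDegree_mul ih.2.1, natDegree_X, ih.2.2]
        omega
      have hrd : (C (((m+1:ℕ):ℝ) * (((m+1:ℕ):ℝ)+1)/4) * f m).natDegree ≤ m :=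
        (natDegree_C_mul_le _ _).trans ih.1.2.le
      have hdc : (C (((m+1:ℕ):ℝ) * (((m+1:ℕ):ℝ)+1)/4) * f m).degree < (X * f (m+1)).degree := by
        apply lt_of_le_of_lt degree_le_natDegree
        rw [degree_eq_natDegree hq.ne_zero, hqd]
        exact_mod_cast lt_of_le_of_lt hrd (by omega)
      constructor
      · rw [hr]; exact hq.sub_of_left hdc
      · rw [hr, natDegree_sub_eq_left_of_natDegree_lt (lt_of_le_of_lt hrd (by omega)), hqd]
  exact fun n => (key n).1

theorem main (h0 : f 0 = 1) (h1 : f 1 = X)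
    (hrec : ∀ n : ℕ, 1 ≤ n →
      f (n + 1) = X * f n - C ((n : ℝ) * ((n : ℝ) + 1) / 4) * f (n - 1)) :
    ∀ n : ℕ, 1 ≤ n → lowering (f n) = (n : ℝ) • f (n - 1) := by
  have hdeg := fdeg f h0 h1 hrec
  have key : ∀ n, (∀ N, n ≤ N → LN N (f n) = (n:ℝ) • f (n-1)) ∧
      (∀ N, n+1 ≤ N → LN N (f (n+1)) = ((n+1 : ℕ):ℝ) • f (n+1-1)) := by
    intro n
    induction n with
    | zero =>
      constructor
      · intro N _
        rw [h0]
        have hz : ∀ k : ℕ, derivative^[2*k+1] (1 : ℝ[X]) = 0 := fun k =>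
          Polynomial.iterate_derivative_eq_zero (by rw [natDegree_one]; omega)
        unfold LN
        simp [hz]
      · intro N hN
        rw [h1]
        obtain ⟨M, rfl⟩ : ∃ M, N = M+1 := ⟨N-1, by omega⟩
        unfold LN
        rw [Finset.sum_range_succ' _ M]
        have h2 : ∀ k : ℕ, derivative^[2*(k+1)+1] (X:ℝ[X]) = 0 := fun k =>
          Polynomial.iterate_derivative_eq_zero (by rw [natDegree_X]; omega)
        simp only [h2, smul_zero, Finset.sum_const_zero, zero_add]
        have hX1 : derivative^[2*0+1] (X:ℝ[X]) = 1 := by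
          show derivative X = (1:ℝ[X])
          exact derivative_X
        rw [hX1, A_one, one_smul, h0]
        norm_num
    | succ m ih =>
      refine ⟨ih.2, ?_⟩
      intro N hN
      obtain ⟨M, rfl⟩ : ∃ M, N = M+1 := ⟨N-1, by omega⟩
      have hr := hrec (m+1) (by omega)
      rw [show m+1-1 = m from by omega, ← Polynomial.smul_eq_C_mul] at hr
      rw [show m+1+1-1 = m+1 from by omega]
      rw [hr, LN_sub, LN_smul]
      have hcomm := LN_comm M (f (m+1)) (by rw [(hdeg (m+1)).2]; omega)
      rw [hcomm]
      have hih2 := ih.2 (M+1) (by omega)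
      rw [show m+1-1 = m from by omega] at hih2
      rw [hih2, LN_smul, ih.1 (M+1) (by omega)]
      cases m with
      | zero =>
        simp only [Nat.cast_zero, zero_smul, smul_zero, sub_zero, add_zero, h0, h1, mul_one]
        rw [show ((0:ℕ)+1 : ℕ) = 1 from rfl]
        push_cast
        rw [Polynomial.smul_eq_C_mul, Polynomial.smul_eq_C_mul]
        rw [show (C (1:ℝ)) = 1 from map_one C]
        rw [show (C (2:ℝ)) = 2 from map_ofNat C 2]
        ring
      | succ l =>
        have hsub := hrec (l+1) (by omega)
        rw [show l+1-1 = l from by omega, ← Polynomial.smul_eq_C_mul] at hsub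
        rw [show l+1-1 = l from by omega]
        rw [hsub]
        rw [mul_smul_comm]
        push_cast
        module

  intro n hn
  obtain ⟨m, rfl⟩ : ∃ m, n = m+1 := ⟨n-1, by omega⟩
  have hlow : lowering (f (m+1)) = LN (m+1) (f (m+1)) :=
    lowering_eq_LN (f (m+1)) (by rw [(hdeg (m+1)).2]; omega)
  rw [hlow]
  have := (key m).2 (m+1) le_rfl
  rw [show m+1-1 = m from by omega] at this ⊢
  exact_mod_cast this

end Main

end MRML

/-- Quasi-monomiality: `L φ̂_n = n φ̂_{n-1}` for `n ≥ 1`. -/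
theorem monicReducedMittagLeffler_lowering (f : ℕ → Polynomial ℝ)
    (h0 : f 0 = 1) (h1 : f 1 = X)
    (hrec : ∀ n : ℕ, 1 ≤ n →
      f (n + 1) = X * f n - C ((n : ℝ) * ((n : ℝ) + 1) / 4) * f (n - 1)) :
    ∀ n : ℕ, 1 ≤ n → lowering (f n) = (n : ℝ) • f (n - 1) :=
  MRML.main f h0 h1 hrec
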